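/- arXiv:2112.14297 — 7 statements merged into one kernel-verified Lean document; each statement's English description precedes it below -/
import Mathlib

section
/- Let β < 0 and let U_e, U_s, U_o, c_e, c_s be real constants. Define the expected profit function Φ(p_e, p_s) = [e^{β p_e + U_e}(p_e − c_e) + e^{β p_s + U_s}(p_s − c_s)] / [e^{β p_e + U_e} + e^{β p_s + U_s} + e^{U_o}]. Then at any critical point (p_e*, p_s*) of Φ (a point where both partial derivatives vanish), the price difference satisfies p_e* − p_s* = c_e − c_s. -/
set_option maxHeartbeats 1000000

lemma aux_deriv (β U c K C : ℝ) (hC : 0 < C) (p : ℝ) :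
    HasDerivAt (fun q => (Real.exp (β*q+U)*(q-c)+K)/(Real.exp (β*q+U)+C))
      (((β*Real.exp (β*p+U)*(p-c)+Real.exp (β*p+U))*(Real.exp (β*p+U)+C)
        - (Real.exp (β*p+U)*(p-c)+K)*(β*Real.exp (β*p+U)))/(Real.exp (β*p+U)+C)^2) p := by
  have h1 : HasDerivAt (fun q : ℝ => β*q+U) β p := by
    simpa using ((hasDerivAt_id p).const_mul β).add_const U
  have hE : HasDerivAt (fun q => Real.exp (β*q+U)) (β*Real.exp (β*p+U)) p := by
    simpa [mul_comm] using h1.exp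
  have hnum : HasDerivAt (fun q => Real.exp (β*q+U)*(q-c)+K)
      (β*Real.exp (β*p+U)*(p-c)+Real.exp (β*p+U)*1) p :=
    (hE.mul ((hasDerivAt_id p).sub_const c)).add_const K
  have hden : HasDerivAt (fun q => Real.exp (β*q+U)+C) (β*Real.exp (β*p+U)) p :=
    hE.add_const C
  have hd0 : Real.exp (β*p+U)+C ≠ 0 := by positivity
  have := hnum.div hden hd0
  simp only [mul_one] at this
  exact this

/-- At any critical point of the MNL multi-product pricing profit function,
the price difference equals the cost difference. -/
theorem stmt_0 (β Ue Us Uo ce cs : ℝ) (hβ : β < 0)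
    (Φ : ℝ → ℝ → ℝ)
    (hΦ : ∀ pe ps, Φ pe ps =
      (Real.exp (β * pe + Ue) * (pe - ce) + Real.exp (β * ps + Us) * (ps - cs)) /
      (Real.exp (β * pe + Ue) + Real.exp (β * ps + Us) + Real.exp Uo))
    (pe ps : ℝ)
    (h1 : deriv (fun p => Φ p ps) pe = 0)
    (h2 : deriv (fun p => Φ pe p) ps = 0) :
    pe - ps = ce - cs := by
  set E := Real.exp (β * pe + Ue) with hEdef
  set S := Real.exp (β * ps + Us) with hSdef
  set O := Real.exp Uo with hOdef
  have hEpos : 0 < E := Real.exp_pos _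
  have hSpos : 0 < S := Real.exp_pos _
  have hOpos : 0 < O := Real.exp_pos _
  -- first coordinate
  have hf1 : (fun p => Φ p ps) = fun q =>
      (Real.exp (β*q+Ue)*(q-ce)+(S*(ps-cs)))/(Real.exp (β*q+Ue)+(S+O)) := by
    funext q; rw [hΦ, ← hSdef]; ring_nf
  have hf2 : (fun p => Φ pe p) = fun q =>
      (Real.exp (β*q+Us)*(q-cs)+(E*(pe-ce)))/(Real.exp (β*q+Us)+(E+O)) := by
    funext q; rw [hΦ, ← hEdef]; ring_nf
  have hD1 := (aux_deriv β Ue ce (S*(ps-cs)) (S+O) (by positivity) pe).deriv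
  have hD2 := (aux_deriv β Us cs (E*(pe-ce)) (E+O) (by positivity) ps).deriv
  rw [← hf1] at hD1
  rw [← hf2] at hD2
  rw [h1] at hD1
  rw [h2] at hD2
  have hden1 : ((E+(S+O))^2) ≠ 0 := by positivity
  have hden2 : ((S+(E+O))^2) ≠ 0 := by positivity
  have e1 : (β*E*(pe-ce)+E)*(E+(S+O)) - (E*(pe-ce)+S*(ps-cs))*(β*E) = 0 := by
    field_simp at hD1; linarith [hD1]
  have e2 : (β*S*(ps-cs)+S)*(S+(E+O)) - (S*(ps-cs)+E*(pe-ce))*(β*S) = 0 := by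
    field_simp at hD2; linarith [hD2]
  have hEne : E ≠ 0 := ne_of_gt hEpos
  have hSne : S ≠ 0 := ne_of_gt hSpos
  set D := E + S + O with hDdef
  have f1 : (β*(pe-ce)+1)*D - β*(E*(pe-ce)+S*(ps-cs)) = 0 := by
    have : E * ((β*(pe-ce)+1)*D - β*(E*(pe-ce)+S*(ps-cs))) = 0 := by
      linear_combination e1
    exact (mul_eq_zero.mp this).resolve_left hEne
  have f2 : (β*(ps-cs)+1)*D - β*(E*(pe-ce)+S*(ps-cs)) = 0 := by
    have : S * ((β*(ps-cs)+1)*D - β*(E*(pe-ce)+S*(ps-cs))) = 0 := by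
      linear_combination e2
    exact (mul_eq_zero.mp this).resolve_left hSne
  have hDpos : 0 < D := by rw [hDdef]; positivity
  have key : β*D*((pe-ce)-(ps-cs)) = 0 := by linear_combination f1 - f2
  have hβD : β*D ≠ 0 := mul_ne_zero (ne_of_lt hβ) (ne_of_gt hDpos)
  have := (mul_eq_zero.mp key).resolve_left hβD
  linarith
end

section
/- Let β < 0 and let U_e, U_s, U_o, c_e, c_s be real constants. The function Φ(p_e, p_s) = [e^{β p_e + U_e}(p_e − c_e) + e^{β p_s + U_s}(p_s − c_s)] / [e^{β p_e + U_e} + e^{β p_s + U_s} + e^{U_o}] has at most one critical point, given explicitly by p_e* = (1/β)·( log[ e^{U_o} · W( (1 + e^{U_s − U_e + β c_s − β c_e}) e^{U_e + β c_e − 1} / e^{U_o} ) / (1 + e^{U_s − U_e + β c_s − β c_e}) ] − U_e ) and p_s* = p_e* − (c_e − c_s), where W is the principal branch of the Lambert W function. -/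
/-- The MNL multi-product pricing profit function has at most one critical point,
given in closed form via the Lambert W function. -/
theorem stmt_1 (β Ue Us Uo ce cs : ℝ) (hβ : β < 0)
    (W : ℝ → ℝ)
    (hWinv : ∀ x : ℝ, 0 ≤ x → W (x * Real.exp x) = x)
    (hW : ∀ y : ℝ, 0 ≤ y → 0 ≤ W y ∧ W y * Real.exp (W y) = y)
    (Φ : ℝ → ℝ → ℝ)
    (hΦ : ∀ pe ps, Φ pe ps =
      (Real.exp (β * pe + Ue) * (pe - ce) + Real.exp (β * ps + Us) * (ps - cs)) /
      (Real.exp (β * pe + Ue) + Real.exp (β * ps + Us) + Real.exp Uo)) :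
    ∀ pe ps : ℝ,
      deriv (fun p => Φ p ps) pe = 0 →
      deriv (fun p => Φ pe p) ps = 0 →
      pe = (1 / β) * (Real.log (Real.exp Uo *
              W ((1 + Real.exp (Us - Ue + β * cs - β * ce)) *
                  Real.exp (Ue + β * ce - 1) / Real.exp Uo) /
              (1 + Real.exp (Us - Ue + β * cs - β * ce))) - Ue)
        ∧ ps = pe - (ce - cs) := by
  intro pe ps h1 h2
  set A := Real.exp (β * pe + Ue) with hA
  set B := Real.exp (β * ps + Us) with hB
  set C := Real.exp Uo with hC
  set K := 1 + Real.exp (Us - Ue + β * cs - β * ce) with hKdef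
  have hApos : 0 < A := Real.exp_pos _
  have hBpos : 0 < B := Real.exp_pos _
  have hCpos : 0 < C := Real.exp_pos _
  have hKpos : 0 < K := by positivity
  have hD : 0 < A + B + C := by positivity
  have hDne : A + B + C ≠ 0 := ne_of_gt hD
  -- derivative in the first variable
  have hde : HasDerivAt (fun p => Real.exp (β * p + Ue)) (β * A) pe := by
    have h0 : HasDerivAt (fun p : ℝ => β * p + Ue) β pe := by
      simpa using ((hasDerivAt_id pe).const_mul β).add_const Ue
    simpa [← hA, mul_comm] using h0.exp
  have hnum1 : HasDerivAt
      (fun p => Real.exp (β * p + Ue) * (p - ce) + Real.exp (β * ps + Us) * (ps - cs))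
      (β * A * (pe - ce) + A) pe := by
    have h0 := (hde.mul ((hasDerivAt_id pe).sub_const ce)).add_const
      (Real.exp (β * ps + Us) * (ps - cs))
    exact h0.congr_deriv (by simp [← hA])
  have hden1 : HasDerivAt
      (fun p => Real.exp (β * p + Ue) + Real.exp (β * ps + Us) + Real.exp Uo)
      (β * A) pe := (hde.add_const _).add_const _
  have heq1 : (fun p => Φ p ps) = fun p =>
      (Real.exp (β * p + Ue) * (p - ce) + Real.exp (β * ps + Us) * (ps - cs)) /
      (Real.exp (β * p + Ue) + Real.exp (β * ps + Us) + Real.exp Uo) := by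
    funext p; exact hΦ p ps
  rw [heq1] at h1
  erw [(hnum1.div hden1 hDne).deriv] at h1
  have E1 : (β * A * (pe - ce) + A) * (A + B + C)
      - (A * (pe - ce) + B * (ps - cs)) * (β * A) = 0 := by
    have h1' := (div_eq_zero_iff.mp h1).resolve_right (pow_ne_zero 2 hDne)
    linear_combination h1'
  -- derivative in the second variable
  have hds : HasDerivAt (fun p => Real.exp (β * p + Us)) (β * B) ps := by
    have h0 : HasDerivAt (fun p : ℝ => β * p + Us) β ps := by
      simpa using ((hasDerivAt_id ps).const_mul β).add_const Us
    simpa [← hB, mul_comm] using h0.exp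
  have hnum2 : HasDerivAt
      (fun p => Real.exp (β * pe + Ue) * (pe - ce) + Real.exp (β * p + Us) * (p - cs))
      (β * B * (ps - cs) + B) ps := by
    have h0 := (hds.mul ((hasDerivAt_id ps).sub_const cs)).const_add
      (Real.exp (β * pe + Ue) * (pe - ce))
    exact h0.congr_deriv (by simp [← hB])
  have hden2 : HasDerivAt
      (fun p => Real.exp (β * pe + Ue) + Real.exp (β * p + Us) + Real.exp Uo)
      (β * B) ps := (hds.const_add _).add_const _
  have heq2 : (fun p => Φ pe p) = fun p =>
      (Real.exp (β * pe + Ue) * (pe - ce) + Real.exp (β * p + Us) * (p - cs)) /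
      (Real.exp (β * pe + Ue) + Real.exp (β * p + Us) + Real.exp Uo) := by
    funext p; exact hΦ pe p
  rw [heq2] at h2
  erw [(hnum2.div hden2 hDne).deriv] at h2
  have E2 : (β * B * (ps - cs) + B) * (A + B + C)
      - (A * (pe - ce) + B * (ps - cs)) * (β * B) = 0 := by
    have h2' := (div_eq_zero_iff.mp h2).resolve_right (pow_ne_zero 2 hDne)
    linear_combination h2'
  -- normalized first-order conditions
  have f1 : (β * (pe - ce) + 1) * (A + B + C)
      = β * (A * (pe - ce) + B * (ps - cs)) := by
    have h' : A * ((β * (pe - ce) + 1) * (A + B + C))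
        = A * (β * (A * (pe - ce) + B * (ps - cs))) := by linear_combination E1
    exact mul_left_cancel₀ (ne_of_gt hApos) h'
  have f2 : (β * (ps - cs) + 1) * (A + B + C)
      = β * (A * (pe - ce) + B * (ps - cs)) := by
    have h' : B * ((β * (ps - cs) + 1) * (A + B + C))
        = B * (β * (A * (pe - ce) + B * (ps - cs))) := by linear_combination E2
    exact mul_left_cancel₀ (ne_of_gt hBpos) h'
  -- equal margins
  have hm : ps - cs = pe - ce := by
    have h' : (ps - cs) * (β * (A + B + C)) = (pe - ce) * (β * (A + B + C)) := by
      linear_combination f2 - f1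
    exact mul_right_cancel₀ (mul_ne_zero (ne_of_lt hβ) hDne) h'
  have hps : ps = pe - (ce - cs) := by linarith
  refine ⟨?_, hps⟩
  -- the key balance equation
  have key : A + B + (β * (pe - ce) + 1) * C = 0 := by
    rw [hm] at f1; linear_combination f1
  have hBA : B = A * Real.exp (Us - Ue + β * cs - β * ce) := by
    rw [hB, hA, ← Real.exp_add]
    congr 1
    rw [hps]; ring
  have hAB : A + B = K * A := by rw [hBA, hKdef]; ring
  set t := -(β * (pe - ce) + 1) with htdef
  have htC : t * C = K * A := by
    rw [htdef]; linear_combination hAB - key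
  have ht : t = K * A / C := by
    rw [eq_div_iff (ne_of_gt hCpos)]; exact htC
  have ht0 : 0 ≤ t := by rw [ht]; positivity
  have hAe : A * Real.exp t = Real.exp (Ue + β * ce - 1) := by
    rw [hA, ← Real.exp_add]
    congr 1
    rw [htdef]; ring
  have hexp : t * Real.exp t = K * Real.exp (Ue + β * ce - 1) / C := by
    rw [eq_div_iff (ne_of_gt hCpos)]
    linear_combination Real.exp t * htC + K * hAe
  have hWt : W (K * Real.exp (Ue + β * ce - 1) / C) = t := by
    rw [← hexp]; exact hWinv t ht0
  rw [hWt]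
  have hCtK : C * t / K = A := by
    field_simp
    linear_combination htC
  rw [hCtK, hA, Real.log_exp]
  field_simp
  rw [add_sub_cancel_right]
  exact (mul_div_cancel_right₀ pe (ne_of_lt hβ)).symm
end

section
/- Let β < 0, let D₁, D₂ > 0, let c_{1,s}, c_{1,e}, c_{2,s}, c_{2,e}, c_{s,s} be real constants, and set C = c_{1,s} + c_{2,s} − c_{s,s}. Assume 0 < C ≤ −1/β. Then the function G(P_{1,s}, P_{1,e}, P_{2,s}, P_{2,e}) = P_{1,s}(log(D₁ P_{1,s}/(1 − P_{1,s} − P_{1,e})) − β c_{1,s}) + P_{1,e}(log(D₁ P_{1,e}/(1 − P_{1,s} − P_{1,e})) − β c_{1,e}) + P_{2,s}(log(D₂ P_{2,s}/(1 − P_{2,s} − P_{2,e})) − β c_{2,s}) + P_{2,e}(log(D₂ P_{2,e}/(1 − P_{2,s} − P_{2,e})) − β c_{2,e}) + β C · P_{1,s} P_{2,s} is convex on the open domain { P_{1,s}, P_{1,e}, P_{2,s}, P_{2,e} > 0, P_{1,s} + P_{1,e} < 1, P_{2,s} + P_{2,e} < 1 }. -/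
open Real Set

private lemma keyA : ConvexOn ℝ (Set.Ioo (0:ℝ) 1) (fun x => x * Real.log x - x^2/2) := by
  have hd : ∀ x : ℝ, x ≠ 0 →
      HasDerivAt (fun x => x * Real.log x - x^2/2) (Real.log x + 1 - x) x := by
    intro x hx
    have h1 : HasDerivAt (fun x : ℝ => x * Real.log x) (1 * Real.log x + x * x⁻¹) x :=
      (hasDerivAt_id x).mul (Real.hasDerivAt_log hx)
    have h2 : HasDerivAt (fun x : ℝ => x^2/2) x x := by
      simpa using (hasDerivAt_pow 2 x).div_const 2
    have h3 := h1.sub h2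
    rw [one_mul, mul_inv_cancel₀ hx] at h3
    exact h3
  have hEq : Set.EqOn (deriv (fun x => x * Real.log x - x^2/2))
      (fun x => Real.log x + 1 - x) (Set.Ioi 0) :=
    fun x hx => (hd x (ne_of_gt hx)).deriv
  apply convexOn_of_deriv2_nonneg (convex_Ioo 0 1)
  · exact (continuousOn_id.mul
      (Real.continuousOn_log.mono (fun x hx => ne_of_gt hx.1))).sub
      (((continuous_pow 2).continuousOn).div_const 2)
  · rw [interior_Ioo]
    exact fun x hx => (hd x (ne_of_gt hx.1)).differentiableAt.differentiableWithinAt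
  · rw [interior_Ioo]
    refine DifferentiableOn.congr (f := fun x => Real.log x + 1 - x) ?_ (fun x hx => hEq hx.1)
    intro x hx
    exact (((Real.differentiableAt_log (ne_of_gt hx.1)).add_const 1).sub
      differentiableAt_id).differentiableWithinAt
  · rw [interior_Ioo]
    intro x hx
    have hxe : (deriv (fun x => x * Real.log x - x^2/2)) =ᶠ[nhds x]
        (fun x => Real.log x + 1 - x) :=
      Filter.eventuallyEq_of_mem (Ioi_mem_nhds hx.1) (fun y hy => hEq hy)
    have h2 : deriv^[2] (fun x => x * Real.log x - x^2/2) x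
        = deriv (fun x => Real.log x + 1 - x) x := by
      rw [Function.iterate_succ_apply', Function.iterate_one]
      exact Filter.EventuallyEq.deriv_eq hxe
    have h3 : HasDerivAt (fun x => Real.log x + 1 - x) (x⁻¹ - 1) x :=
      ((Real.hasDerivAt_log (ne_of_gt hx.1)).add_const 1).sub (hasDerivAt_id x)
    rw [h2, h3.deriv]
    have h4 : (1:ℝ) ≤ x⁻¹ := (one_le_inv₀ hx.1).mpr (le_of_lt hx.2)
    linarith

private lemma cvx_pos {a b x x' : ℝ} (ha : 0 ≤ a) (hb : 0 ≤ b) (hab : a + b = 1)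
    (hx : 0 < x) (hx' : 0 < x') : 0 < a * x + b * x' := by
  rcases le_total x x' with h | h
  · nlinarith [mul_le_mul_of_nonneg_left h hb]
  · nlinarith [mul_le_mul_of_nonneg_left h ha]

private lemma cvx_lt {a b x x' : ℝ} (ha : 0 ≤ a) (hb : 0 ≤ b) (hab : a + b = 1)
    (hx : x < 1) (hx' : x' < 1) : a * x + b * x' < 1 := by
  rcases le_total x x' with h | h
  · nlinarith [mul_le_mul_of_nonneg_left h ha]
  · nlinarith [mul_le_mul_of_nonneg_left h hb]

private lemma comp_aff {s : Set ℝ} {φ : ℝ → ℝ} (hφ : ConvexOn ℝ s φ)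
    {S : Set (ℝ × ℝ × ℝ × ℝ)} (hS : Convex ℝ S) (L : ℝ × ℝ × ℝ × ℝ → ℝ)
    (hL : ∀ (p q : ℝ × ℝ × ℝ × ℝ) (a b : ℝ), a + b = 1 →
      L (a • p + b • q) = a * L p + b * L q)
    (hmap : ∀ p ∈ S, L p ∈ s) : ConvexOn ℝ S (fun p => φ (L p)) := by
  refine ⟨hS, fun p hp q hq a b ha hb hab => ?_⟩
  have h := hφ.2 (hmap p hp) (hmap q hq) ha hb hab
  simp only [smul_eq_mul] at h ⊢
  rw [hL p q a b hab]
  exact h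

private lemma aff_convexOn {S : Set (ℝ × ℝ × ℝ × ℝ)} (hS : Convex ℝ S)
    (k1 k2 k3 k4 : ℝ) :
    ConvexOn ℝ S (fun p => k1 * p.1 + k2 * p.2.1 + k3 * p.2.2.1 + k4 * p.2.2.2) := by
  refine ⟨hS, fun p hp q hq a b ha hb hab => le_of_eq ?_⟩
  have hb' : b = 1 - a := by linarith
  subst hb'
  simp only [Prod.fst_add, Prod.snd_add, Prod.smul_fst, Prod.smul_snd, smul_eq_mul]
  ring

/-- Convexity of the probability-space transformed batched pricing objective. -/
theorem stmt_4 (β D₁ D₂ c1s c1e c2s c2e css : ℝ) (hβ : β < 0)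
    (hD₁ : 0 < D₁) (hD₂ : 0 < D₂)
    (C : ℝ) (hC : C = c1s + c2s - css) (hCpos : 0 < C) (hCb : C ≤ -1 / β) :
    ConvexOn ℝ
      {p : ℝ × ℝ × ℝ × ℝ | 0 < p.1 ∧ 0 < p.2.1 ∧ 0 < p.2.2.1 ∧ 0 < p.2.2.2 ∧
        p.1 + p.2.1 < 1 ∧ p.2.2.1 + p.2.2.2 < 1}
      (fun p : ℝ × ℝ × ℝ × ℝ =>
        p.1 * (Real.log (D₁ * p.1 / (1 - p.1 - p.2.1)) - β * c1s) +
        p.2.1 * (Real.log (D₁ * p.2.1 / (1 - p.1 - p.2.1)) - β * c1e) +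
        p.2.2.1 * (Real.log (D₂ * p.2.2.1 / (1 - p.2.2.1 - p.2.2.2)) - β * c2s) +
        p.2.2.2 * (Real.log (D₂ * p.2.2.2 / (1 - p.2.2.1 - p.2.2.2)) - β * c2e) +
        β * C * (p.1 * p.2.2.1)) := by
  set S : Set (ℝ × ℝ × ℝ × ℝ) :=
    {p : ℝ × ℝ × ℝ × ℝ | 0 < p.1 ∧ 0 < p.2.1 ∧ 0 < p.2.2.1 ∧ 0 < p.2.2.2 ∧
        p.1 + p.2.1 < 1 ∧ p.2.2.1 + p.2.2.2 < 1} with hSdef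
  set t : ℝ := -(β * C) with ht
  have ht0 : 0 ≤ t := by nlinarith
  have ht1 : t ≤ 1 := by
    have hβne : β ≠ 0 := ne_of_lt hβ
    have : -β * C ≤ -β * (-1 / β) := by
      apply mul_le_mul_of_nonneg_left hCb (by linarith)
    have h2 : -β * (-1 / β) = 1 := by field_simp
    nlinarith
  -- convexity of the domain
  have hS : Convex ℝ S := by
    intro p hp q hq a b ha hb hab
    obtain ⟨h1, h2, h3, h4, h5, h6⟩ := hp
    obtain ⟨g1, g2, g3, g4, g5, g6⟩ := hq
    refine ⟨?_, ?_, ?_, ?_, ?_, ?_⟩ <;>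
      simp only [Prod.fst_add, Prod.snd_add, Prod.smul_fst, Prod.smul_snd, smul_eq_mul]
    · exact cvx_pos ha hb hab h1 g1
    · exact cvx_pos ha hb hab h2 g2
    · exact cvx_pos ha hb hab h3 g3
    · exact cvx_pos ha hb hab h4 g4
    · have := cvx_lt ha hb hab h5 g5; linarith [this]; 
    · have := cvx_lt ha hb hab h6 g6; linarith [this]
  -- affinity of the coordinate maps
  have hLx : ∀ (p q : ℝ × ℝ × ℝ × ℝ) (a b : ℝ), a + b = 1 →
      (a • p + b • q).1 = a * p.1 + b * q.1 := by
    intro p q a b hab; simp [Prod.smul_fst, smul_eq_mul]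
  have hLy : ∀ (p q : ℝ × ℝ × ℝ × ℝ) (a b : ℝ), a + b = 1 →
      (a • p + b • q).2.1 = a * p.2.1 + b * q.2.1 := by
    intro p q a b hab; simp [smul_eq_mul]
  have hLz : ∀ (p q : ℝ × ℝ × ℝ × ℝ) (a b : ℝ), a + b = 1 →
      (a • p + b • q).2.2.1 = a * p.2.2.1 + b * q.2.2.1 := by
    intro p q a b hab; simp [smul_eq_mul]
  have hLw : ∀ (p q : ℝ × ℝ × ℝ × ℝ) (a b : ℝ), a + b = 1 →
      (a • p + b • q).2.2.2 = a * p.2.2.2 + b * q.2.2.2 := by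
    intro p q a b hab; simp [smul_eq_mul]
  have hLs : ∀ (p q : ℝ × ℝ × ℝ × ℝ) (a b : ℝ), a + b = 1 →
      (fun p : ℝ × ℝ × ℝ × ℝ => 1 - p.1 - p.2.1) (a • p + b • q)
        = a * (1 - p.1 - p.2.1) + b * (1 - q.1 - q.2.1) := by
    intro p q a b hab
    have hb' : b = 1 - a := by linarith
    subst hb'; simp [smul_eq_mul]; ring
  have hLr : ∀ (p q : ℝ × ℝ × ℝ × ℝ) (a b : ℝ), a + b = 1 →
      (fun p : ℝ × ℝ × ℝ × ℝ => 1 - p.2.2.1 - p.2.2.2) (a • p + b • q)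
        = a * (1 - p.2.2.1 - p.2.2.2) + b * (1 - q.2.2.1 - q.2.2.2) := by
    intro p q a b hab
    have hb' : b = 1 - a := by linarith
    subst hb'; simp [smul_eq_mul]; ring
  have hLd : ∀ (p q : ℝ × ℝ × ℝ × ℝ) (a b : ℝ), a + b = 1 →
      (fun p : ℝ × ℝ × ℝ × ℝ => p.1 - p.2.2.1) (a • p + b • q)
        = a * (p.1 - p.2.2.1) + b * (q.1 - q.2.2.1) := by
    intro p q a b hab; simp [smul_eq_mul]; ring
  -- membership facts
  have hmx : ∀ p ∈ S, p.1 ∈ Set.Ioo (0:ℝ) 1 := by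
    rintro p ⟨h1, h2, h3, h4, h5, h6⟩; exact ⟨h1, by linarith⟩
  have hmz : ∀ p ∈ S, p.2.2.1 ∈ Set.Ioo (0:ℝ) 1 := by
    rintro p ⟨h1, h2, h3, h4, h5, h6⟩; exact ⟨h3, by linarith⟩
  have hmy : ∀ p ∈ S, p.2.1 ∈ Set.Ici (0:ℝ) := by
    rintro p ⟨h1, h2, h3, h4, h5, h6⟩; exact le_of_lt h2
  have hmw : ∀ p ∈ S, p.2.2.2 ∈ Set.Ici (0:ℝ) := by
    rintro p ⟨h1, h2, h3, h4, h5, h6⟩; exact le_of_lt h4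
  have hms : ∀ p ∈ S, (1 - p.1 - p.2.1) ∈ Set.Ioi (0:ℝ) := by
    rintro p ⟨h1, h2, h3, h4, h5, h6⟩; simp; linarith
  have hmr : ∀ p ∈ S, (1 - p.2.2.1 - p.2.2.2) ∈ Set.Ioi (0:ℝ) := by
    rintro p ⟨h1, h2, h3, h4, h5, h6⟩; simp; linarith
  have hmsIci : ∀ p ∈ S, (1 - p.1 - p.2.1) ∈ Set.Ici (0:ℝ) := by
    intro p hp; exact le_of_lt (Set.mem_Ioi.mp (hms p hp))
  have hmrIci : ∀ p ∈ S, (1 - p.2.2.1 - p.2.2.2) ∈ Set.Ici (0:ℝ) := by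
    intro p hp; exact le_of_lt (Set.mem_Ioi.mp (hmr p hp))
  -- convex building blocks
  have hmul_log := Real.convexOn_mul_log
  have hneg_log : ConvexOn ℝ (Set.Ioi (0:ℝ)) (fun u => -Real.log u) :=
    strictConcaveOn_log_Ioi.concaveOn.neg
  have hsq : ConvexOn ℝ (Set.univ : Set ℝ) (fun u : ℝ => u ^ 2) := Even.convexOn_pow even_two
  have P1 : ConvexOn ℝ S (fun p : ℝ × ℝ × ℝ × ℝ => p.1 * Real.log p.1 - p.1 ^ 2 / 2) :=
    comp_aff keyA hS (fun p => p.1) hLx hmx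
  have P2 : ConvexOn ℝ S
      (fun p : ℝ × ℝ × ℝ × ℝ => p.2.2.1 * Real.log p.2.2.1 - p.2.2.1 ^ 2 / 2) :=
    comp_aff keyA hS (fun p => p.2.2.1) hLz hmz
  have P3 : ConvexOn ℝ S (fun p : ℝ × ℝ × ℝ × ℝ => ((1 - t)/2) * p.1 ^ 2) := by
    have h := ((comp_aff hsq hS (fun p => p.1) hLx (fun p _ => Set.mem_univ _)).smul
      (c := (1 - t)/2) (by linarith))
    refine h.congr fun p hp => ?_
    simp [smul_eq_mul]
  have P4 : ConvexOn ℝ S (fun p : ℝ × ℝ × ℝ × ℝ => ((1 - t)/2) * p.2.2.1 ^ 2) := by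
    have h := ((comp_aff hsq hS (fun p => p.2.2.1) hLz (fun p _ => Set.mem_univ _)).smul
      (c := (1 - t)/2) (by linarith))
    refine h.congr fun p hp => ?_
    simp [smul_eq_mul]
  have P5 : ConvexOn ℝ S (fun p : ℝ × ℝ × ℝ × ℝ => (t/2) * (p.1 - p.2.2.1) ^ 2) := by
    have h := ((comp_aff hsq hS (fun p => p.1 - p.2.2.1) hLd (fun p _ => Set.mem_univ _)).smul
      (c := t/2) (by linarith))
    refine h.congr fun p hp => ?_
    simp [smul_eq_mul]
  have P6 : ConvexOn ℝ S (fun p : ℝ × ℝ × ℝ × ℝ => p.2.1 * Real.log p.2.1) :=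
    comp_aff hmul_log hS (fun p => p.2.1) hLy hmy
  have P7 : ConvexOn ℝ S (fun p : ℝ × ℝ × ℝ × ℝ => p.2.2.2 * Real.log p.2.2.2) :=
    comp_aff hmul_log hS (fun p => p.2.2.2) hLw hmw
  have P8 : ConvexOn ℝ S
      (fun p : ℝ × ℝ × ℝ × ℝ => (1 - p.1 - p.2.1) * Real.log (1 - p.1 - p.2.1)) :=
    comp_aff hmul_log hS (fun p => 1 - p.1 - p.2.1) hLs hmsIci
  have P9 : ConvexOn ℝ S
      (fun p : ℝ × ℝ × ℝ × ℝ => (1 - p.2.2.1 - p.2.2.2) * Real.log (1 - p.2.2.1 - p.2.2.2)) :=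
    comp_aff hmul_log hS (fun p => 1 - p.2.2.1 - p.2.2.2) hLr hmrIci
  have P10 : ConvexOn ℝ S (fun p : ℝ × ℝ × ℝ × ℝ => -Real.log (1 - p.1 - p.2.1)) :=
    comp_aff hneg_log hS (fun p => 1 - p.1 - p.2.1) hLs hms
  have P11 : ConvexOn ℝ S (fun p : ℝ × ℝ × ℝ × ℝ => -Real.log (1 - p.2.2.1 - p.2.2.2)) :=
    comp_aff hneg_log hS (fun p => 1 - p.2.2.1 - p.2.2.2) hLr hmr
  have P12 : ConvexOn ℝ S (fun p =>
      (Real.log D₁ - β * c1s) * p.1 + (Real.log D₁ - β * c1e) * p.2.1 +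
      (Real.log D₂ - β * c2s) * p.2.2.1 + (Real.log D₂ - β * c2e) * p.2.2.2) :=
    aff_convexOn hS _ _ _ _
  have hF := ((((((((((P1.add P2).add P3).add P4).add P5).add P6).add P7).add P8).add
      P9).add P10).add P11).add P12
  refine hF.congr fun p hp => ?_
  obtain ⟨h1, h2, h3, h4, h5, h6⟩ := hp
  have hs0 : (0:ℝ) < 1 - p.1 - p.2.1 := by linarith
  have hr0 : (0:ℝ) < 1 - p.2.2.1 - p.2.2.2 := by linarith
  simp only [Pi.add_apply]
  rw [Real.log_div (by positivity) (ne_of_gt hs0),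
      Real.log_div (by positivity) (ne_of_gt hs0),
      Real.log_div (by positivity) (ne_of_gt hr0),
      Real.log_div (by positivity) (ne_of_gt hr0),
      Real.log_mul (ne_of_gt hD₁) (ne_of_gt h1),
      Real.log_mul (ne_of_gt hD₁) (ne_of_gt h2),
      Real.log_mul (ne_of_gt hD₂) (ne_of_gt h3),
      Real.log_mul (ne_of_gt hD₂) (ne_of_gt h4)]
  have htC : β * C = -t := by rw [ht]; ring
  rw [htC]
  ring
end

section
/- Under the assumptions of the batched pricing problem (β < 0, C = c_{1,s} + c_{2,s} − c_{s,s} > 0, 0 < P_{1,s}, P_{1,e}, P_{2,s}, P_{2,e} with P_{1,s}+P_{1,e} < 1 and P_{2,s}+P_{2,e} < 1), the 4×4 Hessian matrix H with entries H₁₁ = 1/P_{1,s} + 1/φ₁ + 1/φ₁², H₂₂ = 1/P_{1,e} + 1/φ₁ + 1/φ₁², H₃₃ = 1/P_{2,s} + 1/φ₂ + 1/φ₂², H₄₄ = 1/P_{2,e} + 1/φ₂ + 1/φ₂², H₁₂ = H₂₁ = 1/φ₁ + 1/φ₁², H₃₄ = H₄₃ = 1/φ₂ + 1/φ₂², H₁₃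 = H₃₁ = βC, and all other entries zero, where φ₁ = 1 − P_{1,s} − P_{1,e} and φ₂ = 1 − P_{2,s} − P_{2,e}, is positive semidefinite whenever C ≤ min{−1/(β P_{1,s}), −1/(β P_{2,s})}. -/
/-- Positive semidefiniteness of the Hessian of the probability-space
transformed batched pricing objective. -/
theorem stmt_5 (β C P1s P1e P2s P2e : ℝ) (hβ : β < 0) (hC : 0 < C)
    (hP1s : 0 < P1s) (hP1e : 0 < P1e) (hP2s : 0 < P2s) (hP2e : 0 < P2e)
    (h1 : P1s + P1e < 1) (h2 : P2s + P2e < 1)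
    (φ₁ φ₂ : ℝ) (hφ₁ : φ₁ = 1 - P1s - P1e) (hφ₂ : φ₂ = 1 - P2s - P2e)
    (hcond : C ≤ min (-1 / (β * P1s)) (-1 / (β * P2s))) :
    (Matrix.of ![![1 / P1s + 1 / φ₁ + 1 / φ₁ ^ 2, 1 / φ₁ + 1 / φ₁ ^ 2, β * C, 0],
      ![1 / φ₁ + 1 / φ₁ ^ 2, 1 / P1e + 1 / φ₁ + 1 / φ₁ ^ 2, 0, 0],
      ![β * C, 0, 1 / P2s + 1 / φ₂ + 1 / φ₂ ^ 2, 1 / φ₂ + 1 / φ₂ ^ 2],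
      ![0, 0, 1 / φ₂ + 1 / φ₂ ^ 2, 1 / P2e + 1 / φ₂ + 1 / φ₂ ^ 2]]).PosSemidef := by
  have hφ1 : 0 < φ₁ := by rw [hφ₁]; linarith
  have hφ2 : 0 < φ₂ := by rw [hφ₂]; linarith
  -- derive β*C*P1s ≥ -1 and β*C*P2s ≥ -1
  have ht1 : (0:ℝ) < -(β * P1s) := by nlinarith
  have ht2 : (0:ℝ) < -(β * P2s) := by nlinarith
  have hc1 : C ≤ 1 / (-(β * P1s)) := by
    have := (le_min_iff.mp hcond).1
    have e : -1 / (β * P1s) = 1 / (-(β * P1s)) := by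
      rw [div_neg, neg_div]
    linarith [e ▸ this]
  have hc2 : C ≤ 1 / (-(β * P2s)) := by
    have := (le_min_iff.mp hcond).2
    have e : -1 / (β * P2s) = 1 / (-(β * P2s)) := by
      rw [div_neg, neg_div]
    linarith [e ▸ this]
  have h1' : C * (-(β * P1s)) ≤ 1 := by
    rw [← le_div_iff₀ ht1]; exact hc1
  have h2' : C * (-(β * P2s)) ≤ 1 := by
    rw [← le_div_iff₀ ht2]; exact hc2
  have ha1 : -(β * C) ≤ 1 / P1s := by
    rw [le_div_iff₀ hP1s]; nlinarith
  have ha2 : -(β * C) ≤ 1 / P2s := by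
    rw [le_div_iff₀ hP2s]; nlinarith
  have haneg : β * C < 0 := mul_neg_of_neg_of_pos hβ hC
  refine Matrix.posSemidef_iff_dotProduct_mulVec.mpr ⟨?_, ?_⟩
  · ext i j
    fin_cases i <;> fin_cases j <;>
      simp [Matrix.conjTranspose_apply, Matrix.vecHead, Matrix.vecTail]
  · intro x
    simp only [dotProduct, Matrix.mulVec, Fin.sum_univ_four, Matrix.of_apply,
      Matrix.cons_val', Matrix.cons_val_zero, Matrix.cons_val_one, Matrix.head_cons,
      Matrix.empty_val', Matrix.cons_val_fin_one, Matrix.head_fin_const,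
      Matrix.cons_val_two, Matrix.tail_cons, Matrix.cons_val_three,
      star, Pi.star_apply, star_trivial, id]
    set a := x 0 with ha; set b := x 1 with hb; set c := x 2 with hcc; set d := x 3 with hd
    have key : 0 ≤ a^2 * (1/P1s) + c^2 * (1/P2s) + 2 * (β*C) * a * c := by
      have e1 : a^2 * (-(β*C)) ≤ a^2 * (1/P1s) :=
        mul_le_mul_of_nonneg_left ha1 (sq_nonneg a)
      have e2 : c^2 * (-(β*C)) ≤ c^2 * (1/P2s) :=
        mul_le_mul_of_nonneg_left ha2 (sq_nonneg c)
      nlinarith [sq_nonneg (a - c), sq_nonneg (a + c), mul_nonneg (sq_nonneg (a-c)) (le_of_lt (neg_pos.mpr haneg)), mul_nonneg (sq_nonneg (a+c)) (le_of_lt (neg_pos.mpr haneg))]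
    have q1 : 0 ≤ (1/φ₁ + 1/φ₁^2) * (a + b)^2 := by positivity
    have q2 : 0 ≤ (1/φ₂ + 1/φ₂^2) * (c + d)^2 := by positivity
    have qb : 0 ≤ b^2 * (1/P1e) := by positivity
    have qd : 0 ≤ d^2 * (1/P2e) := by positivity
    have expand : a * ((1 / P1s + 1 / φ₁ + 1 / φ₁ ^ 2) * a + (1 / φ₁ + 1 / φ₁ ^ 2) * b + β * C * c + 0 * d) +
        b * ((1 / φ₁ + 1 / φ₁ ^ 2) * a + (1 / P1e + 1 / φ₁ + 1 / φ₁ ^ 2) * b + 0 * c + 0 * d) +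
        c * (β * C * a + 0 * b + (1 / P2s + 1 / φ₂ + 1 / φ₂ ^ 2) * c + (1 / φ₂ + 1 / φ₂ ^ 2) * d) +
        d * (0 * a + 0 * b + (1 / φ₂ + 1 / φ₂ ^ 2) * c + (1 / P2e + 1 / φ₂ + 1 / φ₂ ^ 2) * d)
        = (a^2 * (1/P1s) + c^2 * (1/P2s) + 2*(β*C)*a*c) + b^2 * (1/P1e) + d^2 * (1/P2e)
          + (1/φ₁ + 1/φ₁^2)*(a+b)^2 + (1/φ₂+1/φ₂^2)*(c+d)^2 := by
      ring
    rw [expand]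
    linarith [key, q1, q2, qb, qd]
end

section
/- The function h(P_s, P_e) = P_s log(P_s/(1 − P_s − P_e)) + P_e log(P_e/(1 − P_s − P_e)) is convex on the open domain {P_s > 0, P_e > 0, P_s + P_e < 1}. -/
lemma stmt_11_pos_comb {a b u v : ℝ} (ha : 0 ≤ a) (hb : 0 ≤ b) (hab : a + b = 1)
    (hu : 0 < u) (hv : 0 < v) : 0 < a * u + b * v := by
  rcases eq_or_lt_of_le ha with h | h
  · rw [← h]; have : b = 1 := by linarith
    simp [this, hv]
  · nlinarith [mul_nonneg hb hv.le, mul_pos h hu]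

lemma stmt_11_aux {x y : ℝ} (hx : 0 < x) (hy : 0 < y) (hxy : x + y < 1) :
    x * Real.log (x / (1 - x - y)) + y * Real.log (y / (1 - x - y))
      = x * Real.log x + y * Real.log y
        + (1 - x - y) * Real.log (1 - x - y) - Real.log (1 - x - y) := by
  have hz : (0:ℝ) < 1 - x - y := by linarith
  rw [Real.log_div hx.ne' hz.ne', Real.log_div hy.ne' hz.ne']
  ring

/-- Convexity of the negative-entropy term in the probability-space
single-customer MNL pricing objective. -/
theorem stmt_11 :
    ConvexOn ℝ {p : ℝ × ℝ | 0 < p.1 ∧ 0 < p.2 ∧ p.1 + p.2 < 1}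
      (fun p : ℝ × ℝ =>
        p.1 * Real.log (p.1 / (1 - p.1 - p.2)) +
          p.2 * Real.log (p.2 / (1 - p.1 - p.2))) := by
  constructor
  · intro x hx y hy a b ha hb hab
    obtain ⟨hx1, hx2, hx3⟩ := hx
    obtain ⟨hy1, hy2, hy3⟩ := hy
    have h1 : (a • x + b • y).1 = a * x.1 + b * y.1 := by simp [Prod.add_def]
    have h2 : (a • x + b • y).2 = a * x.2 + b * y.2 := by simp [Prod.add_def]
    have hzx : (0:ℝ) < 1 - x.1 - x.2 := by linarith
    have hzy : (0:ℝ) < 1 - y.1 - y.2 := by linarith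
    refine ⟨?_, ?_, ?_⟩ <;> simp only [Set.mem_setOf_eq, h1, h2]
    · exact stmt_11_pos_comb ha hb hab hx1 hy1
    · exact stmt_11_pos_comb ha hb hab hx2 hy2
    · nlinarith [stmt_11_pos_comb ha hb hab hzx hzy]
  · intro x hx y hy a b ha hb hab
    obtain ⟨hx1, hx2, hx3⟩ := hx
    obtain ⟨hy1, hy2, hy3⟩ := hy
    have hc1 : (a • x + b • y).1 = a * x.1 + b * y.1 := by simp [Prod.add_def]
    have hc2 : (a • x + b • y).2 = a * x.2 + b * y.2 := by simp [Prod.add_def]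
    have hzx : (0:ℝ) < 1 - x.1 - x.2 := by linarith
    have hzy : (0:ℝ) < 1 - y.1 - y.2 := by linarith
    have hcm1 : 0 < (a • x + b • y).1 := by
      rw [hc1]; exact stmt_11_pos_comb ha hb hab hx1 hy1
    have hcm2 : 0 < (a • x + b • y).2 := by
      rw [hc2]; exact stmt_11_pos_comb ha hb hab hx2 hy2
    have hcm3 : (a • x + b • y).1 + (a • x + b • y).2 < 1 := by
      rw [hc1, hc2]; nlinarith [stmt_11_pos_comb ha hb hab hzx hzy]
    simp only
    rw [stmt_11_aux hx1 hx2 hx3, stmt_11_aux hy1 hy2 hy3,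
      stmt_11_aux hcm1 hcm2 hcm3]
    have hzc : 1 - (a * x.1 + b * y.1) - (a * x.2 + b * y.2)
        = a * (1 - x.1 - x.2) + b * (1 - y.1 - y.2) := by
      linear_combination -hab
    have A1 := Real.convexOn_mul_log.2 (Set.mem_Ici.2 hx1.le) (Set.mem_Ici.2 hy1.le) ha hb hab
    have A2 := Real.convexOn_mul_log.2 (Set.mem_Ici.2 hx2.le) (Set.mem_Ici.2 hy2.le) ha hb hab
    have A3 := Real.convexOn_mul_log.2 (Set.mem_Ici.2 hzx.le) (Set.mem_Ici.2 hzy.le) ha hb hab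
    have A4 := (strictConcaveOn_log_Ioi.concaveOn.neg).2 (Set.mem_Ioi.2 hzx)
      (Set.mem_Ioi.2 hzy) ha hb hab
    simp only [smul_eq_mul, Pi.neg_apply] at A1 A2 A3 A4
    rw [hc1, hc2, hzc]
    simp only [smul_eq_mul]
    nlinarith [A1, A2, A3, A4]
end

section
/- Let x = e^{U_s}, y = e^{U_e}, D > 0, β < 0, and let d_s, d_e, m, c be real constants with p_s = (log x − d_s)/β, p_e = (log y − d_e)/β. If (x, y) with x, y > 0 satisfies both stationarity equations x + y + y·log(x/y) − (d_s + βm − d_e − βc)·y + D·log x + D(1 − d_s − βm) = 0 and x + y − x·log(x/y) + (d_s + βm − d_e − βc)·x + D·log y + D(1 − d_e − βc) = 0, then x = e^{d_s + βm − d_e − βc}·y, and hence p_e − p_s = c − m. -/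
/-- The first-order conditions for sequential multi-product pricing force the
exponential relation between the choice weights, hence the price-difference
identity. -/
theorem stmt_12 (β D ds de m c x y ps pe : ℝ) (hβ : β < 0) (hD : 0 < D)
    (hx : 0 < x) (hy : 0 < y)
    (hps : ps = (Real.log x - ds) / β) (hpe : pe = (Real.log y - de) / β)
    (h1 : x + y + y * Real.log (x / y) - (ds + β * m - de - β * c) * y +
        D * Real.log x + D * (1 - ds - β * m) = 0)
    (h2 : x + y - x * Real.log (x / y) + (ds + β * m - de - β * c) * x +
        D * Real.log y + D * (1 - de - β * c) = 0) :
    x = Real.exp (ds + β * m - de - β * c) * y ∧ pe - ps = c - m := by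
  set k := ds + β * m - de - β * c with hk
  have hlog : Real.log (x / y) = Real.log x - Real.log y :=
    Real.log_div hx.ne' hy.ne'
  have key : (x + y + D) * (Real.log (x / y) - k) = 0 := by
    linear_combination h1 - h2 + D * hlog
  have hpos : x + y + D ≠ 0 := by positivity
  have hL : Real.log x - Real.log y = k := by
    have := (mul_eq_zero.mp key).resolve_left hpos
    linarith [sub_eq_zero.mp this, hlog]
  have hxy : x = Real.exp k * y := by
    have : Real.exp (Real.log x) = Real.exp (k + Real.log y) := by
      congr 1; linarith
    rw [Real.exp_log hx, Real.exp_add, Real.exp_log hy] at this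
    exact this
  refine ⟨hxy, ?_⟩
  rw [hps, hpe, div_sub_div_same, div_eq_iff hβ.ne]
  linear_combination -hL - hk
end

section
/- Let β < 0 and fix c, d ∈ ℝ and D > 0. The single-product MNL profit function g(p) = e^{βp + d}(p − c)/(e^{βp + d} + D) attains a maximum on ℝ, and any maximizer p* satisfies the first-order condition 1 + β(p* − c)·D/(e^{βp* + d} + D) = 0, i.e., p* = c − (e^{βp* + d} + D)/(βD). -/
open Real Filter Topology

/-- The single-product MNL profit function attains a maximum, and any
maximizer satisfies the first-order condition. -/
theorem stmt_16 (β c d D : ℝ) (hβ : β < 0) (hD : 0 < D)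
    (g : ℝ → ℝ)
    (hg : ∀ p, g p = Real.exp (β * p + d) * (p - c) / (Real.exp (β * p + d) + D)) :
    (∃ p : ℝ, ∀ q : ℝ, g q ≤ g p) ∧
    ∀ p : ℝ, (∀ q : ℝ, g q ≤ g p) →
      1 + β * (p - c) * D / (Real.exp (β * p + d) + D) = 0 ∧
      p = c - (Real.exp (β * p + d) + D) / (β * D) := by
  have hgeq : g = fun p => Real.exp (β * p + d) * (p - c) / (Real.exp (β * p + d) + D) :=
    funext hg
  subst hgeq
  have hb0 : β ≠ 0 := ne_of_lt hβ
  have hden : ∀ p : ℝ, 0 < Real.exp (β * p + d) + D := fun p => by positivity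
  have hcont : Continuous fun p : ℝ =>
      Real.exp (β * p + d) * (p - c) / (Real.exp (β * p + d) + D) := by
    apply Continuous.div
    · fun_prop
    · fun_prop
    · exact fun p => (hden p).ne'
  constructor
  · -- existence of maximum
    set m := Real.exp (β * (c+1) + d) * ((c+1) - c) / (Real.exp (β * (c+1) + d) + D) with hm
    have hmpos : 0 < m := by
      have h1 : (c+1) - c = 1 := by ring
      rw [hm, h1]; positivity
    -- tail bound
    have h1 : Tendsto (fun y : ℝ => y * Real.exp (-y)) atTop (𝓝 0) := by
      simpa using Real.tendsto_pow_mul_exp_neg_atTop_nhds_zero 1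
    have h2 : Tendsto (fun p : ℝ => -β * (p - c)) atTop atTop := by
      apply Tendsto.const_mul_atTop (by linarith : (0:ℝ) < -β)
      exact tendsto_atTop_add_const_right _ _ tendsto_id
    have h3 : Tendsto (fun p : ℝ => (-β * (p - c)) * Real.exp (-(-β * (p - c)))) atTop (𝓝 0) :=
      h1.comp h2
    have h4 : Tendsto (fun p : ℝ => Real.exp (β * p + d) * (p - c)) atTop (𝓝 0) := by
      have := h3.const_mul (Real.exp (d + β * c) / (-β))
      simp only [mul_zero] at this
      convert this using 2 with p
      rw [show -(-β * (p - c)) = β * (p - c) by ring,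
        show β * p + d = (d + β * c) + β * (p - c) by ring, Real.exp_add]
      field_simp
    have h5 : ∀ᶠ p in atTop, Real.exp (β * p + d) * (p - c) < m * D :=
      h4.eventually (gt_mem_nhds (by positivity : (0:ℝ) < m * D))
    rw [eventually_atTop] at h5
    obtain ⟨M, hM⟩ := h5
    have hcle : c ≤ max M (c + 1) := le_trans (by linarith) (le_max_right _ _)
    obtain ⟨p, hpI, hmax⟩ := (isCompact_Icc (a := c) (b := max M (c + 1))).exists_isMaxOn
      ⟨c, le_refl c, hcle⟩ hcont.continuousOn
    have hpm : m ≤ Real.exp (β * p + d) * (p - c) / (Real.exp (β * p + d) + D) := by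
      have := hmax ⟨by linarith, le_max_right _ _⟩
      simpa [hm] using this
    refine ⟨p, fun q => ?_⟩
    rcases le_or_gt q c with hq | hq
    · have : Real.exp (β * q + d) * (q - c) / (Real.exp (β * q + d) + D) ≤ 0 :=
        div_nonpos_of_nonpos_of_nonneg
          (mul_nonpos_of_nonneg_of_nonpos (Real.exp_pos _).le (by linarith)) (hden q).le
      calc Real.exp (β * q + d) * (q - c) / (Real.exp (β * q + d) + D) ≤ 0 := this
        _ ≤ _ := le_trans hmpos.le hpm
    · rcases le_or_gt q (max M (c + 1)) with hq2 | hq2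
      · exact hmax ⟨hq.le, hq2⟩
      · have hqM : M ≤ q := le_trans (le_max_left _ _) hq2.le
        have hnum : Real.exp (β * q + d) * (q - c) < m * D := hM q hqM
        have hle : Real.exp (β * q + d) * (q - c) / (Real.exp (β * q + d) + D) ≤ m := by
          rw [div_le_iff₀ (hden q)]
          nlinarith [Real.exp_pos (β * q + d), hmpos]
        exact le_trans hle hpm
  · intro p hp
    have hE : HasDerivAt (fun x => Real.exp (β * x + d)) (Real.exp (β * p + d) * β) p := by
      have h := ((hasDerivAt_id p).const_mul β).add_const d
      have h2 := (Real.hasDerivAt_exp (β * p + d)).comp p (h := fun x => β * x + d) (by simpa using h)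
      exact h2
    set E := Real.exp (β * p + d) with hEdef
    have hE0 : 0 < E := Real.exp_pos _
    have hnum : HasDerivAt (fun x => Real.exp (β * x + d) * (x - c))
        (E * β * (p - c) + E * 1) p := hE.mul ((hasDerivAt_id p).sub_const c)
    have hdenD : HasDerivAt (fun x => Real.exp (β * x + d) + D) (E * β) p := hE.add_const D
    have hgd : HasDerivAt (fun x => Real.exp (β * x + d) * (x - c) / (Real.exp (β * x + d) + D))
        (((E * β * (p - c) + E * 1) * (E + D) - E * (p - c) * (E * β)) / (E + D) ^ 2) p :=
      hnum.div hdenD (hden p).ne'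
    have hloc : IsLocalMax (fun x => Real.exp (β * x + d) * (x - c) / (Real.exp (β * x + d) + D)) p :=
      Filter.Eventually.of_forall hp
    have hz := hloc.hasDerivAt_eq_zero hgd
    have hn0 : (E * β * (p - c) + E * 1) * (E + D) - E * (p - c) * (E * β) = 0 := by
      have hpow : ((E + D) ^ 2) ≠ 0 := pow_ne_zero _ (hden p).ne'
      field_simp at hz
      linarith [hz]
    have hK : E * (β * (p - c) * D + E + D) = 0 := by linear_combination hn0
    have key : β * (p - c) * D + E + D = 0 := by
      rcases mul_eq_zero.mp hK with h | h
      · exact absurd h hE0.ne'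
      · exact h
    constructor
    · field_simp
      linarith
    · have hbD : β * D ≠ 0 := mul_ne_zero hb0 hD.ne'
      field_simp
      linarith
end
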